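/- Let R be a ring, let M be a subinjective extension-reflecting (si.e.r.) R-module, and let K be a submodule of M. Then K is M-subinjective and M/K is M-subinjective if and only if M is injective. -/

import Mathlib

universe u

/-- `IsSubinjective R B A` means: the `R`-module `B` is `A`-subinjective, i.e. for every
`R`-module `C`, every injective `R`-linear map `i : A → C` and every `R`-linear map
`f : A → B`, there is an `R`-linear map `g : C → B` with `g ∘ i = f`. -/
def IsSubinjective (R : Type u) [Ring R] (B : Type u) [AddCommGroup B] [Module R B]
    (A : Type u) [AddCommGroup A] [Module R A] : Prop :=
  ∀ (C : Type u) [AddCommGroup C] [Module R C] (i : A →ₗ[R] C),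
    Function.Injective i → ∀ f : A →ₗ[R] B, ∃ g : C →ₗ[R] B, g ∘ₗ i = f

/-- `IsSubprojective R B A` means: the `R`-module `B` is `A`-subprojective, i.e. for every
`R`-module `C`, every surjective `R`-linear map `g : C → A` and every `R`-linear map
`f : B → A`, there is an `R`-linear map `h : B → C` with `g ∘ h = f`. -/
def IsSubprojective (R : Type u) [Ring R] (B : Type u) [AddCommGroup B] [Module R B]
    (A : Type u) [AddCommGroup A] [Module R A] : Prop :=
  ∀ (C : Type u) [AddCommGroup C] [Module R C] (g : C →ₗ[R] A),
    Function.Surjective g → ∀ f : B →ₗ[R] A, ∃ h : B →ₗ[R] C, g ∘ₗ h = f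

/-- `M` is subinjective extension-reflecting (si.e.r.): for every short exact sequence
`0 → A → B → C → 0`, if `A` and `C` are `M`-subinjective, then so is `B`. -/
def IsSIER (R : Type u) [Ring R] (M : Type u) [AddCommGroup M] [Module R M] : Prop :=
  ∀ (A B C : Type u) [AddCommGroup A] [Module R A] [AddCommGroup B] [Module R B]
    [AddCommGroup C] [Module R C] (f : A →ₗ[R] B) (g : B →ₗ[R] C),
    Function.Injective f → Function.Surjective g → Function.Exact f g →
    IsSubinjective R A M → IsSubinjective R C M → IsSubinjective R B M

/-- `M` is subprojective extension-reflecting (sp.e.r.): for every short exact sequence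
`0 → A → B → C → 0`, if `A` and `C` are `M`-subprojective, then so is `B`. -/
def IsSPER (R : Type u) [Ring R] (M : Type u) [AddCommGroup M] [Module R M] : Prop :=
  ∀ (A B C : Type u) [AddCommGroup A] [Module R A] [AddCommGroup B] [Module R B]
    [AddCommGroup C] [Module R C] (f : A →ₗ[R] B) (g : B →ₗ[R] C),
    Function.Injective f → Function.Surjective g → Function.Exact f g →
    IsSubprojective R A M → IsSubprojective R C M → IsSubprojective R B M

set_option maxHeartbeats 1000000 in
/-- For an si.e.r. module `M` and a submodule `K ≤ M`: `K` and `M/K` are both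
`M`-subinjective if and only if `M` is injective. -/
theorem sier_subinjective_iff_injective (R : Type u) [Ring R]
    (M : Type u) [AddCommGroup M] [Module R M] (hM : IsSIER R M) (K : Submodule R M) :
    (IsSubinjective R K M ∧ IsSubinjective R (M ⧸ K) M) ↔ Module.Injective R M := by
  constructor
  · rintro ⟨hK, hQ⟩
    -- M is M-subinjective
    have hex : Function.Exact K.subtype K.mkQ := by
      intro y
      simp [Submodule.Quotient.mk_eq_zero]
    have hMM : IsSubinjective R M M :=
      hM K M (M ⧸ K) K.subtype K.mkQ K.injective_subtype K.mkQ_surjective hex hK hQ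
    -- embed M into an injective module
    open CategoryTheory in
    let J := Injective.under (ModuleCat.of R M)
    have hJi : CategoryTheory.Injective (ModuleCat.of R J) :=
      (inferInstance : CategoryTheory.Injective J)
    have hJ : Module.Injective R J :=
      Module.injective_module_of_injective_object R J
    let ι : M →ₗ[R] J := (Injective.ι (ModuleCat.of R M)).hom
    have hι : Function.Injective ι :=
      (ModuleCat.mono_iff_injective (Injective.ι (ModuleCat.of R M))).mp inferInstance
    obtain ⟨r, hr⟩ := hMM J ι hι LinearMap.id
    refine ⟨fun X Y _ _ _ _ f hf g => ?_⟩
    obtain ⟨h, hh⟩ := hJ.out f hf (ι ∘ₗ g)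
    refine ⟨r ∘ₗ h, fun x => ?_⟩
    have := LinearMap.congr_fun hr (g x)
    simp only [LinearMap.comp_apply, hh x] at *
    simpa using this
  · intro hInj
    have H : ∀ (B : Type u) [AddCommGroup B] [Module R B], IsSubinjective R B M := by
      intro B _ _ C _ _ i hi f
      obtain ⟨r, hr⟩ := hInj.out i hi LinearMap.id
      exact ⟨f ∘ₗ r, LinearMap.ext fun x => by simp [hr x]⟩
    exact ⟨H K, H (M ⧸ K)⟩
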